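/- (Rademacher complexity of dictionary classifiers under a multinomial distribution) In the setting of the dictionary-classifier Rademacher bound, if inputs are drawn i.i.d. so that the probability of landing in cell Kⱼ is pⱼ, then the expected empirical Rademacher complexity satisfies E_S R(F±, S) ≤ (∑ⱼ √pⱼ)/(2√N) = √(2^{H_{1/2}(p)}/(4N)), where H_{1/2}(p) = 2 log₂(∑ⱼ √pⱼ) is the Rényi-1/2 entropy. -/

import Mathlib

open Finset

/-- `±1` value of a `Bool`. -/
def radR (b : Bool) : ℝ := if b then 1 else -1

lemma radR_not (b : Bool) : radR (!b) = - radR b := by cases b <;> simp [radR]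
lemma radR_sq (b : Bool) : radR b * radR b = 1 := by cases b <;> norm_num [radR]
lemma radR_abs (b : Bool) : |radR b| = 1 := by cases b <;> norm_num [radR]

/-- flip involution kills the sum -/
lemma sum_flip_zero {N : ℕ} (n : Fin N) (f : (Fin N → Bool) → ℝ)
    (hf : ∀ σ, f (Function.update σ n (!σ n)) = - f σ) :
    ∑ σ : Fin N → Bool, f σ = 0 := by
  refine Finset.sum_ninvolution (fun σ => Function.update σ n (!σ n)) (fun σ => by rw [hf]; ring)
    (fun σ _ hc => ?_) (fun σ => mem_univ _) (fun σ => ?_)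
  · have := congrFun hc n
    simp [Function.update_self] at this
  · funext m
    rcases eq_or_ne m n with rfl | hm
    · simp
    · simp [Function.update_of_ne hm]

lemma sum_radR_single {N : ℕ} (n : Fin N) : ∑ σ : Fin N → Bool, radR (σ n) = 0 := by
  refine sum_flip_zero n _ (fun σ => ?_)
  simp [Function.update_self, radR_not]

lemma sum_radR_pair {N : ℕ} {n m : Fin N} (h : n ≠ m) :
    ∑ σ : Fin N → Bool, radR (σ n) * radR (σ m) = 0 := by
  refine sum_flip_zero n _ (fun σ => ?_)
  rw [Function.update_self, Function.update_of_ne (Ne.symm h), radR_not]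
  ring

lemma sum_sq_sigma {N : ℕ} (A : Finset (Fin N)) (c : Fin N → ℝ) (hc : ∀ n, c n * c n = 1) :
    ∑ σ : Fin N → Bool, (∑ n ∈ A, radR (σ n) * c n)^2 = (A.card : ℝ) * 2^N := by
  have expand : ∀ σ : Fin N → Bool, (∑ n ∈ A, radR (σ n) * c n)^2
      = ∑ n ∈ A, ∑ m ∈ A, (radR (σ n) * c n) * (radR (σ m) * c m) := fun σ => by
    rw [sq, Finset.sum_mul_sum]
  rw [Finset.sum_congr rfl fun σ _ => expand σ, Finset.sum_comm]
  have key : ∀ n ∈ A, (∑ σ : Fin N → Bool, ∑ m ∈ A, (radR (σ n) * c n) * (radR (σ m) * c m))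
      = (2:ℝ)^N := by
    intro n hn
    rw [Finset.sum_comm]
    have inner : ∀ m ∈ A, (∑ σ : Fin N → Bool, (radR (σ n) * c n) * (radR (σ m) * c m))
        = if m = n then (2:ℝ)^N else 0 := by
      intro m _
      rcases eq_or_ne m n with rfl | h
      · rw [if_pos rfl]
        have h1 : ∀ σ : Fin N → Bool, (radR (σ m) * c m) * (radR (σ m) * c m) = 1 := fun σ => by
          nlinarith [radR_sq (σ m), hc m]
        rw [Finset.sum_congr rfl fun σ _ => h1 σ]
        simp [Finset.card_univ]
      · rw [if_neg h]
        have h2 : ∀ σ : Fin N → Bool, (radR (σ n) * c n) * (radR (σ m) * c m)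
            = (c n * c m) * (radR (σ n) * radR (σ m)) := fun σ => by ring
        rw [Finset.sum_congr rfl fun σ _ => h2 σ, ← Finset.mul_sum,
          sum_radR_pair (Ne.symm h), mul_zero]
    rw [Finset.sum_congr rfl inner, Finset.sum_ite_eq' A n (fun _ => (2:ℝ)^N), if_pos hn]
  rw [Finset.sum_congr rfl key, Finset.sum_const, nsmul_eq_mul]

lemma khintchine {N : ℕ} (A : Finset (Fin N)) (c : Fin N → ℝ) (hc : ∀ n, c n * c n = 1) :
    ∑ σ : Fin N → Bool, |∑ n ∈ A, radR (σ n) * c n| ≤ 2^N * Real.sqrt A.card := by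
  set T := ∑ σ : Fin N → Bool, |∑ n ∈ A, radR (σ n) * c n| with hT
  have hTnn : 0 ≤ T := Finset.sum_nonneg fun σ _ => abs_nonneg _
  have hcs : T^2 ≤ ((univ : Finset (Fin N → Bool)).card : ℝ)
      * ∑ σ : Fin N → Bool, |∑ n ∈ A, radR (σ n) * c n|^2 :=
    sq_sum_le_card_mul_sum_sq
  have hcard : ((univ : Finset (Fin N → Bool)).card : ℝ) = 2^N := by
    simp [Finset.card_univ]
  have hsq : ∑ σ : Fin N → Bool, |∑ n ∈ A, radR (σ n) * c n|^2 = (A.card : ℝ) * 2^N := by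
    simp_rw [sq_abs]
    exact sum_sq_sigma A c hc
  rw [hcard, hsq] at hcs
  have hR : (0:ℝ) ≤ 2^N * Real.sqrt A.card := by positivity
  have hR2 : (2^N * Real.sqrt A.card)^2 = 2^N * ((A.card : ℝ) * 2^N) := by
    rw [mul_pow, Real.sq_sqrt (Nat.cast_nonneg _)]
    ring
  nlinarith [hcs, hR2, hTnn, hR]

/-- Empirical Rademacher complexity of the 0-1 loss for the class of `±1`-valued
dictionary classifiers (functions constant on each of `K` cells), for a sample whose
`n`-th point lies in cell `x n` and carries label `y n`. -/
noncomputable def empRad {K N : ℕ} (x : Fin N → Fin K) (y : Fin N → Bool) : ℝ :=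
  ((2 : ℝ) ^ N)⁻¹ * ∑ σ : Fin N → Bool,
    (univ : Finset (Fin K → Bool)).sup' Finset.univ_nonempty
      (fun g => (1 / N : ℝ) *
        ∑ n, radR (σ n) * ((1 - radR (y n) * radR (g (x n))) / 2))

lemma empRad_le {K N : ℕ} [NeZero K] (x : Fin N → Fin K) (y : Fin N → Bool) :
    empRad x y ≤ (2 * (N:ℝ))⁻¹ *
      ∑ j : Fin K, Real.sqrt ((univ.filter (fun n => x n = j)).card) := by
  set A : Fin K → Finset (Fin N) := fun j => univ.filter (fun n => x n = j) with hA
  set S : Fin K → (Fin N → Bool) → ℝ := fun j σ => ∑ n ∈ A j, radR (σ n) * radR (y n) with hS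
  set G : (Fin N → Bool) → ℝ := fun σ =>
    (1 / N : ℝ) * ((∑ n, radR (σ n)) / 2 + (1/2) * ∑ j, |S j σ|) with hG
  have sup_le : ∀ σ : Fin N → Bool,
      (univ : Finset (Fin K → Bool)).sup' Finset.univ_nonempty
        (fun g => (1 / N : ℝ) *
          ∑ n, radR (σ n) * ((1 - radR (y n) * radR (g (x n))) / 2)) ≤ G σ := by
    intro σ
    refine Finset.sup'_le _ _ fun g _ => ?_
    have hNnn : (0:ℝ) ≤ 1 / N := by positivity
    refine mul_le_mul_of_nonneg_left ?_ hNnn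
    have expand : ∑ n, radR (σ n) * ((1 - radR (y n) * radR (g (x n))) / 2)
        = (∑ n, radR (σ n)) / 2
          - (1/2) * ∑ n, (radR (σ n) * radR (y n)) * radR (g (x n)) := by
      have : ∀ n : Fin N, radR (σ n) * ((1 - radR (y n) * radR (g (x n))) / 2)
          = radR (σ n) / 2 - (1/2) * ((radR (σ n) * radR (y n)) * radR (g (x n))) := by
        intro n; ring
      rw [Finset.sum_congr rfl fun n _ => this n, Finset.sum_sub_distrib,
        ← Finset.sum_div, ← Finset.mul_sum]
    rw [expand]
    have fib : ∑ n, (radR (σ n) * radR (y n)) * radR (g (x n))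
        = ∑ j, radR (g j) * S j σ := by
      rw [← Finset.sum_fiberwise_of_maps_to (fun n _ => mem_univ (x n))
        (fun n => (radR (σ n) * radR (y n)) * radR (g (x n)))]
      refine Finset.sum_congr rfl fun j _ => ?_
      rw [hS, Finset.mul_sum]
      refine Finset.sum_congr rfl fun n hn => ?_
      have : x n = j := (Finset.mem_filter.mp hn).2
      rw [this]; ring
    rw [fib]
    have hterm : ∀ j : Fin K, -|S j σ| ≤ radR (g j) * S j σ := by
      intro j
      have h1 : |radR (g j) * S j σ| = |S j σ| := by
        rw [abs_mul, radR_abs, one_mul]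
      calc -|S j σ| = -|radR (g j) * S j σ| := by rw [h1]
        _ ≤ radR (g j) * S j σ := neg_abs_le _
    have : -∑ j, |S j σ| ≤ ∑ j, radR (g j) * S j σ := by
      rw [← Finset.sum_neg_distrib]
      exact Finset.sum_le_sum fun j _ => hterm j
    linarith
  have step1 : empRad x y ≤ ((2:ℝ)^N)⁻¹ * ∑ σ : Fin N → Bool, G σ := by
    unfold empRad
    have h2 : (0:ℝ) ≤ ((2:ℝ)^N)⁻¹ := by positivity
    exact mul_le_mul_of_nonneg_left (Finset.sum_le_sum fun σ _ => sup_le σ) h2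
  have sumG : ∑ σ : Fin N → Bool, G σ
      = (1 / N : ℝ) * ((1/2) * ∑ j, ∑ σ : Fin N → Bool, |S j σ|) := by
    rw [hG, ← Finset.mul_sum]
    congr 1
    rw [Finset.sum_add_distrib, ← Finset.sum_div, ← Finset.mul_sum]
    have hz : ∑ σ : Fin N → Bool, ∑ n, radR (σ n) = 0 := by
      rw [Finset.sum_comm]
      exact Finset.sum_eq_zero fun n _ => sum_radR_single n
    rw [hz, Finset.sum_comm]
    ring
  have kh : ∀ j : Fin K, ∑ σ : Fin N → Bool, |S j σ| ≤ 2^N * Real.sqrt ((A j).card) :=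
    fun j => khintchine (A j) (fun n => radR (y n)) (fun n => radR_sq (y n))
  calc empRad x y ≤ ((2:ℝ)^N)⁻¹ * ∑ σ : Fin N → Bool, G σ := step1
    _ = ((2:ℝ)^N)⁻¹ * ((1 / N : ℝ) * ((1/2) * ∑ j, ∑ σ : Fin N → Bool, |S j σ|)) := by
        rw [sumG]
    _ ≤ ((2:ℝ)^N)⁻¹ * ((1 / N : ℝ) * ((1/2) * ∑ j, (2:ℝ)^N * Real.sqrt ((A j).card))) := by
        gcongr
        exact kh _
    _ = (2 * (N:ℝ))⁻¹ * ∑ j : Fin K, Real.sqrt ((A j).card) := by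
        rw [← Finset.mul_sum]
        rcases Nat.eq_zero_or_pos N with rfl | hN
        · simp
        · have : ((2:ℝ)^N) ≠ 0 := by positivity
          have hN' : (N:ℝ) ≠ 0 := Nat.cast_ne_zero.mpr hN.ne'
          generalize (∑ j : Fin K, Real.sqrt ((A j).card)) = s
          rw [show ((2:ℝ)^N)⁻¹ * (1 / N * (1/2 * (2^N * s))) = ((2:ℝ)^N)⁻¹ * 2^N * ((2 * (N:ℝ))⁻¹ * s) by ring,
            inv_mul_cancel₀ this, one_mul]

lemma weights_sum {K N : ℕ} (p : Fin K → ℝ) (hp1 : ∑ j, p j = 1) :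
    ∑ x : Fin N → Fin K, ∏ n, p (x n) = 1 := by
  rw [← Fintype.piFinset_univ, Finset.sum_prod_piFinset]
  simp [hp1]

lemma expected_count {K N : ℕ} (p : Fin K → ℝ) (hp1 : ∑ j, p j = 1) (j : Fin K) :
    ∑ x : Fin N → Fin K, (∏ n, p (x n)) * ((univ.filter (fun n => x n = j)).card : ℝ)
      = N * p j := by
  have card_eq : ∀ x : Fin N → Fin K, ((univ.filter (fun n => x n = j)).card : ℝ)
      = ∑ n : Fin N, (if x n = j then (1:ℝ) else 0) := by
    intro x; rw [Finset.card_filter]; push_cast; rfl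
  calc ∑ x : Fin N → Fin K, (∏ n, p (x n)) * ((univ.filter (fun n => x n = j)).card : ℝ)
      = ∑ x : Fin N → Fin K, ∑ n : Fin N,
          (∏ m, p (x m)) * (if x n = j then (1:ℝ) else 0) := by
        refine Finset.sum_congr rfl fun x _ => ?_
        rw [card_eq x, Finset.mul_sum]
    _ = ∑ n : Fin N, ∑ x : Fin N → Fin K,
          (∏ m, p (x m)) * (if x n = j then (1:ℝ) else 0) := Finset.sum_comm
    _ = ∑ _n : Fin N, p j := by
        refine Finset.sum_congr rfl fun n _ => ?_
        set q : Fin N → Fin K → ℝ :=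
          fun m k => if m = n then (if k = j then p k else 0) else p k with hq
        have hf : ∀ x : Fin N → Fin K,
            (∏ m, p (x m)) * (if x n = j then (1:ℝ) else 0) = ∏ m, q m (x m) := by
          intro x
          rcases eq_or_ne (x n) j with h | h
          · rw [if_pos h, mul_one]
            refine Finset.prod_congr rfl fun m _ => ?_
            rcases eq_or_ne m n with rfl | hm
            · simp [hq, h]
            · simp [hq, hm]
          · rw [if_neg h, mul_zero]
            refine (Finset.prod_eq_zero (mem_univ n) ?_).symm
            simp [hq, h]
        rw [Finset.sum_congr rfl fun x _ => hf x, ← Fintype.piFinset_univ,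
          Finset.sum_prod_piFinset]
        have hcol : ∀ m : Fin N, ∑ k : Fin K, q m k = if m = n then p j else 1 := by
          intro m
          rcases eq_or_ne m n with rfl | hm
          · simp only [hq, if_pos rfl, eq_self_iff_true, if_true]
            rw [Finset.sum_ite_eq' univ j p]
            simp
          · simp only [hq, if_neg hm]
            exact hp1
          -- done
        rw [Finset.prod_congr rfl fun m _ => hcol m,
          Finset.prod_ite_eq' univ n (fun _ => p j), if_pos (mem_univ n)]
    _ = N * p j := by rw [Finset.sum_const]; simp [mul_comm]

lemma jensen_sqrt {ι : Type*} [Fintype ι] (w a : ι → ℝ) (hw : ∀ i, 0 ≤ w i) (ha : ∀ i, 0 ≤ a i)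
    (hw1 : ∑ i, w i = 1) :
    ∑ i, w i * Real.sqrt (a i) ≤ Real.sqrt (∑ i, w i * a i) := by
  have key := Finset.sum_sq_le_sum_mul_sum_of_sq_eq_mul (univ : Finset ι) (f := w)
    (g := fun i => w i * a i) (r := fun i => w i * Real.sqrt (a i)) (fun i _ => hw i)
    (fun i _ => mul_nonneg (hw i) (ha i))
    (fun i _ => by rw [mul_pow, Real.sq_sqrt (ha i)]; ring)
  rw [hw1, one_mul] at key
  have h0 : 0 ≤ ∑ i, w i * Real.sqrt (a i) :=
    Finset.sum_nonneg fun i _ => mul_nonneg (hw i) (Real.sqrt_nonneg _)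
  calc ∑ i, w i * Real.sqrt (a i)
      = Real.sqrt ((∑ i, w i * Real.sqrt (a i))^2) := (Real.sqrt_sq h0).symm
    _ ≤ Real.sqrt (∑ i, w i * a i) := Real.sqrt_le_sqrt key

/-- Rademacher complexity of dictionary classifiers under i.i.d. cell assignments with
probabilities `pⱼ`: `E_S R(F±, S) ≤ (∑ⱼ √pⱼ)/(2√N) = √(2^{H_{1/2}(p)}/(4N))`, where
`H_{1/2}(p) = 2 log₂ ∑ⱼ √pⱼ`. -/
theorem rademacher_dictionary_multinomial {K N : ℕ} (hN : 0 < N) (hK : 0 < K)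
    (p : Fin K → ℝ) (hp : ∀ j, 0 ≤ p j) (hp1 : ∑ j, p j = 1)
    (y : Fin N → Bool) :
    (∑ x : Fin N → Fin K, (∏ n, p (x n)) * empRad x y)
        ≤ (∑ j, Real.sqrt (p j)) / (2 * Real.sqrt N) ∧
    (∑ j, Real.sqrt (p j)) / (2 * Real.sqrt N)
        = Real.sqrt ((2 : ℝ) ^ (2 * Real.logb 2 (∑ j, Real.sqrt (p j))) / (4 * N)) := by

  haveI : NeZero K := ⟨hK.ne'⟩
  have hNpos : (0:ℝ) < N := Nat.cast_pos.mpr hN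
  have hsqrtN : Real.sqrt N * Real.sqrt N = N := Real.mul_self_sqrt hNpos.le
  have hsqrtNpos : 0 < Real.sqrt N := Real.sqrt_pos.mpr hNpos
  set w : (Fin N → Fin K) → ℝ := fun x => ∏ n, p (x n) with hw
  have hwnn : ∀ x, 0 ≤ w x := fun x => Finset.prod_nonneg fun n _ => hp (x n)
  have hw1 : ∑ x : Fin N → Fin K, w x = 1 := weights_sum p hp1
  have hs : 0 < ∑ j, Real.sqrt (p j) := by
    obtain ⟨j, hj⟩ : ∃ j, 0 < p j := by
      by_contra h
      push_neg at h
      have : ∑ j, p j = 0 :=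
        Finset.sum_eq_zero fun j _ => le_antisymm (h j) (hp j)
      rw [this] at hp1; norm_num at hp1
    exact Finset.sum_pos' (fun i _ => Real.sqrt_nonneg _)
      ⟨j, mem_univ j, Real.sqrt_pos.mpr hj⟩
  constructor
  · have step1 : ∑ x : Fin N → Fin K, w x * empRad x y
        ≤ ∑ x : Fin N → Fin K, w x * ((2 * (N:ℝ))⁻¹ *
          ∑ j : Fin K, Real.sqrt ((univ.filter (fun n => x n = j)).card)) :=
      Finset.sum_le_sum fun x _ => mul_le_mul_of_nonneg_left (empRad_le x y) (hwnn x)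
    have step2 : ∑ x : Fin N → Fin K, w x * ((2 * (N:ℝ))⁻¹ *
          ∑ j : Fin K, Real.sqrt ((univ.filter (fun n => x n = j)).card))
        = (2 * (N:ℝ))⁻¹ * ∑ j : Fin K, ∑ x : Fin N → Fin K,
            w x * Real.sqrt ((univ.filter (fun n => x n = j)).card) := by
      have h1 : ∀ x : Fin N → Fin K, w x * ((2 * (N:ℝ))⁻¹ *
            ∑ j : Fin K, Real.sqrt ((univ.filter (fun n => x n = j)).card))
          = ∑ j : Fin K, (2 * (N:ℝ))⁻¹ *
              (w x * Real.sqrt ((univ.filter (fun n => x n = j)).card)) := by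
        intro x
        rw [Finset.mul_sum, Finset.mul_sum]
        exact Finset.sum_congr rfl fun j _ => by ring
      rw [Finset.sum_congr rfl fun x _ => h1 x, Finset.sum_comm, Finset.mul_sum]
      exact Finset.sum_congr rfl fun j _ => by rw [Finset.mul_sum]
    have step3 : ∀ j : Fin K, ∑ x : Fin N → Fin K,
        w x * Real.sqrt ((univ.filter (fun n => x n = j)).card)
        ≤ Real.sqrt N * Real.sqrt (p j) := by
      intro j
      have hj := jensen_sqrt w
        (fun x => ((univ.filter (fun n => x n = j)).card : ℝ)) hwnn
        (fun x => Nat.cast_nonneg _) hw1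
      rw [expected_count p hp1 j] at hj
      rwa [Real.sqrt_mul (Nat.cast_nonneg N)] at hj
    calc ∑ x : Fin N → Fin K, w x * empRad x y
        ≤ (2 * (N:ℝ))⁻¹ * ∑ j : Fin K, ∑ x : Fin N → Fin K,
            w x * Real.sqrt ((univ.filter (fun n => x n = j)).card) := by
          rw [← step2]; exact step1
      _ ≤ (2 * (N:ℝ))⁻¹ * ∑ j : Fin K, Real.sqrt N * Real.sqrt (p j) := by
          gcongr
          exact step3 _
      _ = (∑ j, Real.sqrt (p j)) / (2 * Real.sqrt N) := by
          rw [← Finset.mul_sum]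
          field_simp
          linear_combination hsqrtN
  · have h2 : (2:ℝ) ^ (2 * Real.logb 2 (∑ j, Real.sqrt (p j)))
        = (∑ j, Real.sqrt (p j))^2 := by
      rw [mul_comm, Real.rpow_mul (by norm_num : (0:ℝ) ≤ 2),
        Real.rpow_logb (by norm_num) (by norm_num) hs, Real.rpow_two]
    rw [h2, Real.sqrt_div (sq_nonneg _), Real.sqrt_sq hs.le,
      show (4:ℝ) * N = (2 * Real.sqrt N)^2 by rw [mul_pow, sq (Real.sqrt (N:ℝ)), hsqrtN]; norm_num,
      Real.sqrt_sq (by positivity)]
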